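/- If a closed, pointed, convex cone C is dim(C)-Terracini convex, then C is Terracini convex (i.e., k-Terracini convex for all k). -/

import Mathlib

open Set RealInnerProductSpace Metric

section Defs

variable {E : Type*} [AddCommGroup E] [Module ℝ E]

/-- `C` is a convex cone (as a set). -/
def IsConvexCone (C : Set E) : Prop :=
  Convex ℝ C ∧ ∀ x ∈ C, ∀ t : ℝ, 0 ≤ t → t • x ∈ C

/-- A cone is pointed if it contains no lines through the origin. -/
def IsPointedCone (C : Set E) : Prop := C ∩ (-C) ⊆ {0}

/-- `x` generates an extreme ray of `C`. -/
def IsExtremeRayGen (C : Set E) (x : E) : Prop :=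
  x ∈ C ∧ x ≠ 0 ∧ ∀ y ∈ C, ∀ z ∈ C, y + z = x → ∃ t : ℝ, 0 ≤ t ∧ y = t • x

/-- `F` is a face of the convex cone `C`. -/
def IsFace (C F : Set E) : Prop :=
  F ⊆ C ∧ ∀ x ∈ C, ∀ y ∈ C, x + y ∈ F → x ∈ F ∧ y ∈ F

/-- The minimal face of `C` containing `x` (the intersection of all faces containing `x`). -/
def minFace (C : Set E) (x : E) : Set E := ⋂₀ {F | IsFace C F ∧ x ∈ F}

variable [TopologicalSpace E]

/-- The cone of feasible directions from `x` into `C`. -/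
def feasDir (C : Set E) (x : E) : Set E :=
  {v | ∃ t : ℝ, 0 ≤ t ∧ ∃ z ∈ C, v = t • (z - x)}

/-- The tangent cone of `C` at `x`: the closure of the cone of feasible directions. -/
def tangentCone' (C : Set E) (x : E) : Set E := closure (feasDir C x)

/-- The convex tangent space of `C` at `x`: the lineality space of the tangent cone. -/
def ctSpace (C : Set E) (x : E) : Set E := tangentCone' C x ∩ -(tangentCone' C x)

/-- `C` is `k`-Terracini convex: for any `k` generators of extreme rays, the convex tangent
space at their sum equals the (subspace) sum of the individual convex tangent spaces. -/
def kTerracini (C : Set E) (k : ℕ) : Prop :=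
  ∀ x : Fin k → E, (∀ i, IsExtremeRayGen C (x i)) →
    ctSpace C (∑ i, x i) = (Submodule.span ℝ (⋃ i, ctSpace C (x i)) : Set E)

end Defs

section InnerDefs

variable {E : Type*} [NormedAddCommGroup E] [InnerProductSpace ℝ E]

/-- The normal cone of `C` at `x`: linear functionals (identified with vectors) that are
nonpositive on `C` and vanish at `x`. -/
def normalCone' (C : Set E) (x : E) : Set E :=
  {ℓ : E | (∀ z ∈ C, ⟪ℓ, z⟫ ≤ 0) ∧ ⟪ℓ, x⟫ = 0}

/-- `F` is an exposed face of the cone `C`. -/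
def IsExposedFace (C F : Set E) : Prop :=
  ∃ ℓ : E, (∀ z ∈ C, ⟪ℓ, z⟫ ≤ 0) ∧ F = {z ∈ C | ⟪ℓ, z⟫ = 0}

/-- The set of normalized generators of extreme rays of `K`. -/
def normExt (K : Set E) : Set E := {x | IsExtremeRayGen K x ∧ ‖x‖ = 1}

/-- `K` is `k`-neighborly. -/
def kNeighborly (K : Set E) (k : ℕ) : Prop :=
  ∀ I : Set E, I ⊆ normExt K → I.Finite → I.ncard ≤ k →
    ∃ ℓ : E, (∀ x ∈ I, ⟪ℓ, x⟫ = 0) ∧ ∀ x ∈ normExt K \ I, 0 < ⟪ℓ, x⟫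

/-- `K` is non-degenerate `k`-neighborly: the exposing functional additionally satisfies a
local quadratic growth condition near the exposed extreme rays. -/
def nonDegNeighborly (K : Set E) (k : ℕ) : Prop :=
  ∀ I : Set E, I ⊆ normExt K → I.Finite → I.ncard ≤ k →
    ∃ (ε μ : ℝ) (ℓ : E), 0 < ε ∧ 0 < μ ∧
      (∀ x ∈ I, ⟪ℓ, x⟫ = 0) ∧ (∀ x ∈ normExt K \ I, 0 < ⟪ℓ, x⟫) ∧
      ∀ x ∈ normExt K, (∃ z ∈ I, dist x z < ε) →
        μ * (Metric.infDist x I) ^ 2 ≤ ⟪ℓ, x⟫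

/-- `K` is regular: linear functionals nonnegative on `K` vanishing at an extreme ray grow at
most quadratically near that extreme ray, along normalized extreme rays. -/
def RegularCone (K : Set E) : Prop :=
  ∀ x₀ : E, IsExtremeRayGen K x₀ → ∀ ℓ : E, (∀ z ∈ K, 0 ≤ ⟪ℓ, z⟫) → ⟪ℓ, x₀⟫ = 0 →
    ∃ δ ν : ℝ, 0 < δ ∧ 0 < ν ∧
      ∀ x ∈ normExt K, ‖x - x₀‖ < δ → ⟪ℓ, x⟫ ≤ ν * ‖x - x₀‖ ^ 2

end InnerDefs

section Aux

variable {E : Type*} [NormedAddCommGroup E] [NormedSpace ℝ E] {C : Set E} {a b x u v : E}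

lemma cone_add_mem (hC : IsConvexCone C) (hu : u ∈ C) (hv : v ∈ C) : u + v ∈ C := by
  have h := hC.1 hu hv (by norm_num : (0:ℝ) ≤ 1/2) (by norm_num : (0:ℝ) ≤ 1/2)
    (by norm_num : (1:ℝ)/2 + 1/2 = 1)
  have h2 := hC.2 _ h 2 (by norm_num)
  convert h2 using 1
  module

lemma cone_sum_mem (hC : IsConvexCone C) (h0 : (0:E) ∈ C) {ι : Type*} (s : Finset ι)
    (f : ι → E) (hf : ∀ i ∈ s, f i ∈ C) : ∑ i ∈ s, f i ∈ C :=
  Finset.sum_induction f (· ∈ C) (fun _ _ => cone_add_mem hC) h0 hf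

lemma mem_feasDir_of_smul_sub {t : ℝ} (ht : 0 ≤ t) {z : E} (hz : z ∈ C) :
    t • (z - a) ∈ feasDir C a := ⟨t, ht, z, hz, rfl⟩

lemma feasDir_smul {c : ℝ} (hc : 0 ≤ c) (hv : v ∈ feasDir C a) : c • v ∈ feasDir C a := by
  obtain ⟨t, ht, z, hz, rfl⟩ := hv
  exact ⟨c * t, mul_nonneg hc ht, z, hz, smul_smul c t _⟩

lemma feasDir_add (hC : IsConvexCone C) (ha : a ∈ C) (hu : u ∈ feasDir C a)
    (hv : v ∈ feasDir C a) : u + v ∈ feasDir C a := by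
  obtain ⟨t, ht, z, hz, rfl⟩ := hu
  obtain ⟨s, hs, w, hw, rfl⟩ := hv
  rcases eq_or_lt_of_le (add_nonneg ht hs) with hT | hT
  · have ht0 : t = 0 := by nlinarith
    have hs0 : s = 0 := by nlinarith
    refine ⟨0, le_rfl, a, ha, ?_⟩
    subst ht0; subst hs0; simp
  · set T := t + s with hTdef
    have hT' : T ≠ 0 := ne_of_gt hT
    refine ⟨T, le_of_lt hT, (t/T) • z + (s/T) • w,
      hC.1 hz hw (by positivity) (by positivity)
        (by rw [← add_div, div_self hT']), ?_⟩
    match_scalars <;> field_simp <;> ring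

lemma feasDir_convex (hC : IsConvexCone C) (ha : a ∈ C) : Convex ℝ (feasDir C a) :=
  fun u hu v hv p q hp hq _ =>
    feasDir_add hC ha (feasDir_smul hp hu) (feasDir_smul hq hv)

lemma tc_zero (ha : a ∈ C) : (0:E) ∈ tangentCone' C a :=
  subset_closure ⟨0, le_rfl, a, ha, (zero_smul ℝ _).symm⟩

lemma tc_smul {c : ℝ} (hc : 0 ≤ c) (hv : v ∈ tangentCone' C a) :
    c • v ∈ tangentCone' C a := by
  have := image_closure_subset_closure_image (f := fun w : E => c • w)
    (continuous_const_smul c) (s := feasDir C a)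
  have h1 : c • v ∈ (fun w : E => c • w) '' closure (feasDir C a) := ⟨v, hv, rfl⟩
  refine closure_mono ?_ (this h1)
  rintro _ ⟨w, hw, rfl⟩
  exact feasDir_smul hc hw

lemma tc_add (hC : IsConvexCone C) (ha : a ∈ C) (hu : u ∈ tangentCone' C a)
    (hv : v ∈ tangentCone' C a) : u + v ∈ tangentCone' C a := by
  have hconv : Convex ℝ (tangentCone' C a) := (feasDir_convex hC ha).closure
  have hmid := hconv hu hv (by norm_num : (0:ℝ) ≤ 1/2) (by norm_num : (0:ℝ) ≤ 1/2)
    (by norm_num : (1:ℝ)/2 + 1/2 = 1)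
  have := tc_smul (by norm_num : (0:ℝ) ≤ 2) hmid
  convert this using 1
  module

/-- The convex tangent space as a submodule. -/
def linSub (hC : IsConvexCone C) (ha : a ∈ C) : Submodule ℝ E where
  carrier := ctSpace C a
  zero_mem' := ⟨tc_zero ha, by simpa using tc_zero ha⟩
  add_mem' := fun hu hv =>
    ⟨tc_add hC ha hu.1 hv.1, by
      have := tc_add hC ha (Set.mem_neg.mp hu.2) (Set.mem_neg.mp hv.2)
      refine Set.mem_neg.mpr ?_
      convert this using 1
      abel⟩
  smul_mem' := by
    have key : ∀ c : ℝ, 0 ≤ c → ∀ w : E, w ∈ ctSpace C a → c • w ∈ ctSpace C a := by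
      intro c hc w hw
      exact ⟨tc_smul hc hw.1, by simpa using tc_smul hc (Set.mem_neg.mp hw.2)⟩
    intro c w hw
    rcases le_or_gt 0 c with hc | hc
    · exact key c hc w hw
    · have hw' : -w ∈ ctSpace C a := ⟨Set.mem_neg.mp hw.2, by simpa using hw.1⟩
      have := key (-c) (by linarith) (-w) hw'
      simpa using this

@[simp] lemma linSub_coe (hC : IsConvexCone C) (ha : a ∈ C) :
    (linSub hC ha : Set E) = ctSpace C a := rfl

lemma feasDir_mono (hC : IsConvexCone C) (hb : b ∈ C) :
    feasDir C a ⊆ feasDir C (a + b) := by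
  rintro _ ⟨t, ht, z, hz, rfl⟩
  refine ⟨t, ht, z + b, cone_add_mem hC hz hb, ?_⟩
  congr 1
  abel

lemma ctSpace_mono (hC : IsConvexCone C) (hb : b ∈ C) :
    ctSpace C a ⊆ ctSpace C (a + b) := by
  have h := closure_mono (feasDir_mono (a := a) hC hb)
  exact fun w hw => ⟨h hw.1, by
    have := h (Set.mem_neg.mp hw.2); exact Set.mem_neg.mpr this⟩

lemma self_mem_ctSpace (hC : IsConvexCone C) (ha : a ∈ C) (hx : x ∈ C) :
    x ∈ ctSpace C (a + x) := by
  constructor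
  · refine subset_closure ⟨1, zero_le_one, a + x + x, cone_add_mem hC (cone_add_mem hC ha hx) hx, ?_⟩
    rw [one_smul]; abel
  · refine Set.mem_neg.mpr (subset_closure ⟨1, zero_le_one, a, ha, ?_⟩)
    rw [one_smul]; abel

lemma ctSpace_add_eq (hC : IsConvexCone C) (ha : a ∈ C) (hx : x ∈ C)
    (h : x ∈ ctSpace C a) : ctSpace C (a + x) = ctSpace C a := by
  refine Set.Subset.antisymm ?_ (ctSpace_mono hC hx)
  have hKsub : tangentCone' C (a + x) ⊆ tangentCone' C a := by
    refine closure_minimal ?_ isClosed_closure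
    rintro _ ⟨t, ht, z, hz, rfl⟩
    have h1 : t • (z - a) ∈ tangentCone' C a :=
      subset_closure (mem_feasDir_of_smul_sub ht hz)
    have h2 : t • (-x) ∈ tangentCone' C a := tc_smul ht (Set.mem_neg.mp h.2)
    have := tc_add hC ha h1 h2
    convert this using 1
    module
  exact fun w hw => ⟨hKsub hw.1, Set.mem_neg.mpr (hKsub (Set.mem_neg.mp hw.2))⟩

lemma ctSpace_zero (hC : IsConvexCone C) (hcl : IsClosed C) (hp : IsPointedCone C)
    (h0 : (0:E) ∈ C) : ctSpace C 0 = {(0:E)} := by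
  have hfd : feasDir C 0 = C := by
    ext w
    constructor
    · rintro ⟨t, ht, z, hz, rfl⟩
      simpa using hC.2 z hz t ht
    · intro hw
      exact ⟨1, zero_le_one, w, hw, by simp⟩
  have htc : tangentCone' C 0 = C := by rw [tangentCone', hfd, hcl.closure_eq]
  apply Set.Subset.antisymm
  · rw [ctSpace, htc]; exact hp
  · rintro w rfl
    refine ⟨?_, Set.mem_neg.mpr ?_⟩ <;> rw [htc] <;> simpa using h0

lemma ctSpace_subset_span [FiniteDimensional ℝ E] (ha : a ∈ C) :
    ctSpace C a ⊆ (Submodule.span ℝ C : Set E) := by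
  have hfd : feasDir C a ⊆ (Submodule.span ℝ C : Set E) := by
    rintro _ ⟨t, ht, z, hz, rfl⟩
    exact Submodule.smul_mem _ _ (Submodule.sub_mem _
      (Submodule.subset_span hz) (Submodule.subset_span ha))
  have hclosed : IsClosed ((Submodule.span ℝ C : Submodule ℝ E) : Set E) :=
    (Submodule.span ℝ C).closed_of_finiteDimensional
  exact fun w hw => closure_minimal hfd hclosed hw.1

end Aux

section Main

variable {E : Type*} [NormedAddCommGroup E] [NormedSpace ℝ E] [FiniteDimensional ℝ E]
variable {C : Set E}

lemma kTerracini_zero (hC : IsConvexCone C) (hcl : IsClosed C) (hp : IsPointedCone C)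
    (h0 : (0:E) ∈ C) : kTerracini C 0 := by
  intro x _
  have h1 : ∑ i, x i = (0:E) := by simp
  have h2 : (⋃ i, ctSpace C (x i)) = (∅ : Set E) := by simp
  rw [h1, h2, ctSpace_zero hC hcl hp h0, Submodule.span_empty]
  simp

lemma kTerracini_descend_one (hC : IsConvexCone C) (h0 : (0:E) ∈ C) {k : ℕ} (hk : 1 ≤ k)
    (h : kTerracini C (k+1)) : kTerracini C k := by
  intro x hx
  set i0 : Fin k := ⟨k-1, by omega⟩ with hi0
  set z := x i0 with hzdef
  set y : Fin (k+1) → E := Fin.snoc x z with hy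
  have hyx : ∀ j : Fin (k+1), IsExtremeRayGen C (y j) := by
    intro j
    induction j using Fin.lastCases with
    | last => rw [hy]; simp only [Fin.snoc_last]; exact hx i0
    | cast j => rw [hy]; simp only [Fin.snoc_castSucc]; exact hx j
  have hsumy : ∑ j, y j = (∑ i, x i) + z := by
    rw [Fin.sum_univ_castSucc]
    simp [hy, Fin.snoc_castSucc, Fin.snoc_last]
  have hzC : z ∈ C := (hx i0).1
  have hrestC : (∑ i ∈ Finset.univ.erase i0, x i) ∈ C :=
    cone_sum_mem hC h0 _ _ (fun i _ => (hx i).1)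
  have hsumxC : (∑ i, x i) ∈ C := cone_sum_mem hC h0 _ _ (fun i _ => (hx i).1)
  have hrest : ∑ i, x i = (∑ i ∈ Finset.univ.erase i0, x i) + z := by
    rw [add_comm, Finset.add_sum_erase _ _ (Finset.mem_univ i0)]
  have hz_mem : z ∈ ctSpace C (∑ i, x i) := by
    rw [hrest]; exact self_mem_ctSpace hC hrestC hzC
  have hL : ctSpace C (∑ j, y j) = ctSpace C (∑ i, x i) := by
    rw [hsumy]; exact ctSpace_add_eq hC hsumxC hzC hz_mem
  have hU : (⋃ j, ctSpace C (y j)) = ⋃ i, ctSpace C (x i) := by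
    apply Set.Subset.antisymm
    · refine Set.iUnion_subset fun j => ?_
      induction j using Fin.lastCases with
      | last => rw [hy]; simp only [Fin.snoc_last]; exact Set.subset_iUnion (fun i => ctSpace C (x i)) i0
      | cast j => rw [hy]; simp only [Fin.snoc_castSucc]; exact Set.subset_iUnion (fun i => ctSpace C (x i)) j
    · refine Set.iUnion_subset fun i => ?_
      have hxy : ctSpace C (x i) = ctSpace C (y i.castSucc) := by
        rw [hy]; simp only [Fin.snoc_castSucc]
      rw [hxy]
      exact Set.subset_iUnion (fun j => ctSpace C (y j)) i.castSucc
  calc ctSpace C (∑ i, x i) = ctSpace C (∑ j, y j) := hL.symm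
    _ = ↑(Submodule.span ℝ (⋃ j, ctSpace C (y j))) := h y hyx
    _ = ↑(Submodule.span ℝ (⋃ i, ctSpace C (x i))) := by rw [hU]

lemma kTerracini_descend (hC : IsConvexCone C) (h0 : (0:E) ∈ C) :
    ∀ j k, 1 ≤ k → kTerracini C (k + j) → kTerracini C k := by
  intro j
  induction j with
  | zero => exact fun k _ h => h
  | succ j IH =>
    intro k hk h
    exact IH k hk (kTerracini_descend_one hC h0 (by omega : 1 ≤ k + j) h)

end Main



/-- If a closed, pointed, convex cone `C` is `dim(C)`-Terracini convex, then `C`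
is Terracini convex, i.e., `k`-Terracini convex for all `k`. -/
theorem terracini_of_dim_terracini {d : ℕ}
    (C : Set (EuclideanSpace ℝ (Fin d)))
    (hC : IsConvexCone C) (hclosed : IsClosed C) (hpointed : IsPointedCone C)
    (hT : kTerracini C (Module.finrank ℝ (Submodule.span ℝ C))) :
    ∀ k, kTerracini C k := by
  set D := Module.finrank ℝ (Submodule.span ℝ C) with hD
  rcases C.eq_empty_or_nonempty with hemp | hne
  · -- empty cone: hT is contradictory
    exfalso
    have hD0 : D = 0 := by rw [hD, hemp, Submodule.span_empty, finrank_bot]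
    rw [hD0] at hT
    have hTT := hT (fun _ => 0) (fun i => i.elim0)
    have hfd : feasDir C (0:(EuclideanSpace ℝ (Fin d))) = ∅ := by
      rw [hemp]; ext w; simp [feasDir]
    have hct : ctSpace C (∑ _i : Fin 0, (0:(EuclideanSpace ℝ (Fin d)))) = ∅ := by
      simp [ctSpace, tangentCone', hfd]
    have h0mem : (0:(EuclideanSpace ℝ (Fin d))) ∈
        (Submodule.span ℝ (⋃ _i : Fin 0, ctSpace C (0:(EuclideanSpace ℝ (Fin d)))) : Set (EuclideanSpace ℝ (Fin d))) :=
      Submodule.zero_mem _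
    rw [← hTT, hct] at h0mem
    exact h0mem
  obtain ⟨a0, ha0⟩ := hne
  have h0 : (0:(EuclideanSpace ℝ (Fin d))) ∈ C := by simpa using hC.2 a0 ha0 0 le_rfl
  -- Part A : span of the union is always contained in the ctSpace of the sum
  have hA : ∀ (k : ℕ) (x : Fin k → (EuclideanSpace ℝ (Fin d))), (∀ i, x i ∈ C) →
      (Submodule.span ℝ (⋃ i, ctSpace C (x i)) : Set (EuclideanSpace ℝ (Fin d))) ⊆ ctSpace C (∑ i, x i) := by
    intro k x hx
    have hsC : ∑ i, x i ∈ C := cone_sum_mem hC h0 _ _ (fun i _ => hx i)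
    have hle : Submodule.span ℝ (⋃ i, ctSpace C (x i)) ≤ linSub hC hsC := by
      rw [Submodule.span_le]
      refine Set.iUnion_subset fun i => ?_
      have hsplit : ∑ j, x j = x i + ∑ j ∈ Finset.univ.erase i, x j :=
        (Finset.add_sum_erase _ _ (Finset.mem_univ i)).symm
      have hmono := ctSpace_mono (a := x i) hC
        (cone_sum_mem hC h0 (Finset.univ.erase i) x (fun j _ => hx j))
      rw [linSub_coe, hsplit]
      exact hmono
    exact fun w hw => hle hw
  intro k
  induction k with
  | zero => exact kTerracini_zero hC hclosed hpointed h0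
  | succ n IH =>
    intro x hx
    have hxC : ∀ i, x i ∈ C := fun i => (hx i).1
    by_cases hdrop : ∃ i : Fin (n+1), x i ∈ ctSpace C (∑ j ∈ Finset.univ.erase i, x j)
    · -- drop a redundant generator
      obtain ⟨i, hi⟩ := hdrop
      set x' : Fin n → (EuclideanSpace ℝ (Fin d)) := fun j => x (i.succAbove j) with hx'
      have hx'ext : ∀ j, IsExtremeRayGen C (x' j) := fun j => hx _
      have herase : ∑ j, x' j = ∑ j ∈ Finset.univ.erase i, x j := by
        have h1 : ∑ j, x j = x i + ∑ j, x' j := Fin.sum_univ_succAbove x i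
        have h2 : ∑ j, x j = x i + ∑ j ∈ Finset.univ.erase i, x j :=
          (Finset.add_sum_erase _ _ (Finset.mem_univ i)).symm
        exact add_left_cancel (h1.symm.trans h2)
      have hx'C : ∑ j, x' j ∈ C := cone_sum_mem hC h0 _ _ fun j _ => (hx'ext j).1
      have heq : ctSpace C (∑ j, x j) = ctSpace C (∑ j, x' j) := by
        have hsplit : ∑ j, x j = (∑ j, x' j) + x i := by
          rw [Fin.sum_univ_succAbove x i, add_comm]
        rw [hsplit]
        exact ctSpace_add_eq hC hx'C (hxC i) (herase ▸ hi)
      have hIH := IH x' hx'ext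
      apply Set.Subset.antisymm
      · rw [heq, hIH]
        have hle : Submodule.span ℝ (⋃ j, ctSpace C (x' j)) ≤
            Submodule.span ℝ (⋃ i, ctSpace C (x i)) := by
          apply Submodule.span_mono
          exact Set.iUnion_subset fun j =>
            Set.subset_iUnion (fun i => ctSpace C (x i)) (i.succAbove j)
        exact fun w hw => hle hw
      · exact hA _ x hxC
    · -- no generator is redundant: then n+1 ≤ D
      push_neg at hdrop
      set g : ℕ → (EuclideanSpace ℝ (Fin d)) := fun m => if h : m < n+1 then x ⟨m, h⟩ else 0 with hg
      have hgC : ∀ m, g m ∈ C := by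
        intro m; rw [hg]; dsimp only; split
        · exact hxC _
        · exact h0
      set s : ℕ → (EuclideanSpace ℝ (Fin d)) := fun m => ∑ j ∈ Finset.range m, g j with hs
      have hsCm : ∀ m, s m ∈ C := fun m => cone_sum_mem hC h0 _ _ fun j _ => hgC j
      have hgx : ∀ (m : ℕ) (hm : m < n+1), g m = x ⟨m, hm⟩ := by
        intro m hm; rw [hg]; dsimp only; rw [dif_pos hm]
      have hsum_eq : s (n+1) = ∑ i, x i := by
        rw [hs]; dsimp only
        rw [← Fin.sum_univ_eq_sum_range g (n+1)]
        exact Finset.sum_congr rfl fun i _ => hgx i.val i.isLt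
      have hnotin : ∀ (m : ℕ) (hm : m < n+1), x ⟨m, hm⟩ ∉ ctSpace C (s m) := by
        intro m hm hmem
        apply hdrop ⟨m, hm⟩
        have h1 : (∑ j, x j) = (∑ j ∈ Finset.univ.erase (⟨m,hm⟩ : Fin (n+1)), x j)
            + x ⟨m,hm⟩ := (Finset.sum_erase_add _ _ (Finset.mem_univ _)).symm
        have h2 : (∑ j, x j) = (s m + ∑ j ∈ Finset.Ico (m+1) (n+1), g j) + x ⟨m,hm⟩ := by
          rw [← hsum_eq, hs]; dsimp only
          rw [← Finset.sum_range_add_sum_Ico g (show m+1 ≤ n+1 by omega),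
            Finset.sum_range_succ, hgx m hm]
          abel
        have hsplit : (∑ j ∈ Finset.univ.erase (⟨m,hm⟩ : Fin (n+1)), x j)
            = s m + ∑ j ∈ Finset.Ico (m+1) (n+1), g j :=
          add_right_cancel (h1.symm.trans h2)
        rw [hsplit]
        exact ctSpace_mono hC (cone_sum_mem hC h0 _ _ fun j _ => hgC j) hmem
      have hchain : ∀ m, m ≤ n+1 → m ≤ Module.finrank ℝ (linSub hC (hsCm m)) := by
        intro m
        induction m with
        | zero => intro _; omega
        | succ p IHp =>
          intro hp
          have hlt : linSub hC (hsCm p) < linSub hC (hsCm (p+1)) := by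
            have hple : s (p+1) = s p + g p := Finset.sum_range_succ g p
            refine lt_of_le_of_ne ?_ ?_
            · intro w hw
              have hmono : ctSpace C (s p) ⊆ ctSpace C (s (p+1)) := by
                rw [hple]; exact ctSpace_mono hC (hgC p)
              exact hmono hw
            · intro hEq
              have hpn : p < n+1 := by omega
              have hself : x ⟨p, hpn⟩ ∈ ctSpace C (s (p+1)) := by
                rw [hple, hgx p hpn]
                exact self_mem_ctSpace hC (hsCm p) (hxC _)
              have hin : x ⟨p, hpn⟩ ∈ ctSpace C (s p) := by
                rw [← linSub_coe hC (hsCm p), hEq]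
                exact hself
              exact hnotin p hpn hin
          have hrk := Submodule.finrank_lt_finrank_of_lt hlt
          have := IHp (by omega)
          omega
      have hrank_le : Module.finrank ℝ (linSub hC (hsCm (n+1))) ≤ D := by
        have hle : linSub hC (hsCm (n+1)) ≤ Submodule.span ℝ C :=
          fun w hw => ctSpace_subset_span (hsCm (n+1)) hw
        exact Submodule.finrank_mono hle
      have hkd : n+1 ≤ D := le_trans (hchain (n+1) le_rfl) hrank_le
      have hk : kTerracini C (n+1) := by
        refine kTerracini_descend hC h0 (D - (n+1)) (n+1) (by omega) ?_
        have hDD : (n+1) + (D - (n+1)) = D := by omega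
        rw [hDD]
        exact hT
      exact hk x hx
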